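/- In any algebra (S,*,') satisfying the three axioms, the identity x = x * (x' * x) holds for all x in S. -/
import Mathlib


theorem stmt (S : Type*) (m : S → S → S) (i : S → S)
    (E1 : ∀ x, m (m x (i x)) x = x)
    (E2 : ∀ x y, m (m x (i x)) (m (i y) y) = m (m (i y) y) (m x (i x)))
    (E3 : ∀ x y z, m (m x y) z = m x (m y (i (i z)))) :
    ∀ x, m x (m (i x) x) = x := by
  have eq2 : ∀ a b, m (m (m a (i (i b))) (i b)) b = m a (i (i b)) := by
    intro a b
    conv_rhs => rw [← E1 (i (i b))]
    rw [← E3, ← E3]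
  have eq3 : ∀ b, m (i b) (i (i b)) = m (i b) b := by
    intro b
    have h := eq2 (i b) b
    rw [E1 (i b)] at h
    exact h.symm
  have eq5 : ∀ a b, m (m a (i b)) b = m a (m (i b) b) := by
    intro a b
    rw [E3, eq3]
  intro x
  have h := eq5 x x
  rw [E1] at h
  exact h.symm
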